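/- Let α > 0 and let τ : ℝ → ℝ be twice differentiable with τ(t) > 0 for all t, τ(0) = 1, τ'(0) = 0, and τ''(t) = α / (2 τ(t)^(1+α)) for all t ∈ ℝ. Then τ(t)/t → 1 as t → +∞; in particular τ(t) is asymptotically equivalent to t at infinity. -/

import Mathlib

open Filter

/-- If `f` has derivative `f'` everywhere and `f' → L` at `+∞`, then `f t / t → L`. -/
lemma tendsto_div_of_deriv_tendsto (f f' : ℝ → ℝ) (L : ℝ)
    (hd : ∀ t, HasDerivAt f (f' t) t) (hl : Tendsto f' atTop (nhds L)) :
    Tendsto (fun t => f t / t) atTop (nhds L) := by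
  have hgo : (fun t => f t - L * t) =o[atTop] (fun t : ℝ => t) := by
    rw [Asymptotics.isLittleO_iff]
    intro c hc
    have hl' : Tendsto (fun s => f' s - L) atTop (nhds 0) := by
      simpa using hl.sub_const L
    obtain ⟨T₀, hT₀⟩ := (Metric.tendsto_atTop.mp hl' (c / 2) (by positivity))
    set T := max T₀ 0 with hT
    have hTnn : (0:ℝ) ≤ T := le_max_right _ _
    have hbound : ∀ s ≥ T, |f' s - L| ≤ c / 2 := by
      intro s hs
      have := hT₀ s (le_trans (le_max_left _ _) hs)
      rw [Real.dist_eq, sub_zero] at this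
      linarith
    set g : ℝ → ℝ := fun t => f t - L * t with hg
    have hgd : ∀ t, HasDerivAt g (f' t - L) t := by
      intro t
      exact ((hd t).sub ((hasDerivAt_id t).const_mul L)).congr_deriv (by ring)
    filter_upwards [eventually_ge_atTop (max T (2 * |g T| / c))] with t ht
    have htT : T ≤ t := le_trans (le_max_left _ _) ht
    have htg : 2 * |g T| / c ≤ t := le_trans (le_max_right _ _) ht
    have htnn : 0 ≤ t := le_trans hTnn htT
    have hmvt : ‖g t - g T‖ ≤ (c / 2) * ‖t - T‖ := by
      apply Convex.norm_image_sub_le_of_norm_hasDerivWithin_le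
        (f' := fun s => f' s - L) (s := Set.Icc T t)
        (fun x hx => (hgd x).hasDerivWithinAt)
        (fun x hx => by simpa [Real.norm_eq_abs] using hbound x hx.1)
        (convex_Icc T t) ⟨le_refl T, htT⟩ ⟨htT, le_refl t⟩
    rw [Real.norm_eq_abs, Real.norm_eq_abs] at hmvt ⊢
    have h1 : |t - T| ≤ t := by rw [abs_of_nonneg (by linarith)]; linarith
    have h2 : |g T| ≤ c / 2 * t := by
      have : 2 * |g T| ≤ c * t := by
        rw [div_le_iff₀ hc] at htg; linarith [htg]
      linarith
    have h3 : |g t| ≤ |g t - g T| + |g T| := by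
      calc |g t| = |(g t - g T) + g T| := by ring_nf
        _ ≤ |g t - g T| + |g T| := abs_add_le _ _
    have habs_t : |t| = t := abs_of_nonneg htnn
    calc |g t| ≤ (c/2) * |t - T| + |g T| := by linarith
      _ ≤ (c/2) * t + c/2 * t := by nlinarith [abs_nonneg (t - T)]
      _ = c * |t| := by rw [habs_t]; ring
  have h0 : Tendsto (fun t => (f t - L * t) / t) atTop (nhds 0) :=
    hgo.tendsto_div_nhds_zero
  have := h0.add_const L
  rw [zero_add] at this
  refine this.congr' ?_
  filter_upwards [eventually_gt_atTop (0:ℝ)] with t ht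
  field_simp
  ring

/-- The solution of the scaling ODE is asymptotically equivalent to `t`:
`τ(t)/t → 1` as `t → +∞`. -/
theorem scaling_ode_asymptotic (α : ℝ) (hα : 0 < α) (τ τ' : ℝ → ℝ)
    (hpos : ∀ t, 0 < τ t) (hτ0 : τ 0 = 1) (hτ'0 : τ' 0 = 0)
    (hd1 : ∀ t, HasDerivAt τ (τ' t) t)
    (hd2 : ∀ t, HasDerivAt τ' (α / (2 * τ t ^ (1 + α))) t) :
    Filter.Tendsto (fun t => τ t / t) Filter.atTop (nhds 1) := by
  -- energy conservation
  set E : ℝ → ℝ := fun t => τ' t ^ 2 + τ t ^ (-α) with hEdef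
  have hEd : ∀ t, HasDerivAt E 0 t := by
    intro t
    have h1 : HasDerivAt (fun s => τ' s ^ 2)
        ((2:ℕ) * τ' t ^ 1 * (α / (2 * τ t ^ (1 + α)))) t := (hd2 t).pow 2
    have h2 : HasDerivAt (fun s => τ s ^ (-α))
        (τ' t * (-α) * τ t ^ (-α - 1)) t :=
      (hd1 t).rpow_const (Or.inl (ne_of_gt (hpos t)))
    have key : (2:ℕ) * τ' t ^ 1 * (α / (2 * τ t ^ (1 + α)))
        + τ' t * (-α) * τ t ^ (-α - 1) = 0 := by
      have hne : τ t ^ (1 + α) ≠ 0 := (Real.rpow_pos_of_pos (hpos t) _).ne'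
      have hx : τ t ^ (-α - 1) = (τ t ^ (1 + α))⁻¹ := by
        rw [← Real.rpow_neg (hpos t).le]
        ring_nf
      rw [hx]
      field_simp
      ring
    have := h1.add h2
    rw [show ((2:ℕ) * τ' t ^ 1 * (α / (2 * τ t ^ (1 + α)))
        + τ' t * (-α) * τ t ^ (-α - 1)) = 0 from key] at this
    exact this
  have hE1 : ∀ t, E t = 1 := by
    intro t
    have hconst : E t = E 0 :=
      is_const_of_deriv_eq_zero (fun x => (hEd x).differentiableAt)
        (fun x => (hEd x).deriv) t 0
    rw [hconst]
    simp [hEdef, hτ'0, hτ0]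
  have hE1' : ∀ t, τ' t ^ 2 + τ t ^ (-α) = 1 := hE1
  -- τ' is strictly monotone
  have hsm : StrictMono τ' :=
    strictMono_of_hasDerivAt_pos hd2 (fun t => div_pos hα (mul_pos two_pos (Real.rpow_pos_of_pos (hpos t) _)))
  have hτ'nonneg : ∀ t, 0 ≤ t → 0 ≤ τ' t := fun t ht => hτ'0 ▸ hsm.monotone ht
  set c : ℝ := τ' 1 with hc
  have hcpos : 0 < c := hτ'0 ▸ hsm one_pos
  -- τ grows at least linearly: τ t ≥ τ 1 + c * (t - 1) for t ≥ 1
  have hmono : MonotoneOn (fun t => τ t - c * t) (Set.Ici 1) := by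
    apply monotoneOn_of_deriv_nonneg (convex_Ici 1)
    · exact (Continuous.continuousOn (by
        exact continuous_iff_continuousAt.mpr fun x =>
          (((hd1 x).sub ((hasDerivAt_id x).const_mul c)).differentiableAt.continuousAt)))
    · intro x _
      exact (((hd1 x).sub ((hasDerivAt_id x).const_mul c)).differentiableAt).differentiableWithinAt
    · intro x hx
      rw [interior_Ici] at hx
      have hder : HasDerivAt (fun t => τ t - c * t) (τ' x - c) x := by
        exact ((hd1 x).sub ((hasDerivAt_id x).const_mul c)).congr_deriv (by ring)
      rw [hder.deriv]
      have := hsm.monotone hx.le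
      linarith
  have hlin : ∀ t ≥ (1:ℝ), τ 1 - c + c * t ≤ τ t := by
    intro t ht
    have := hmono (Set.self_mem_Ici) (Set.mem_Ici.mpr ht) ht
    simp only at this
    linarith
  have htop : Tendsto τ atTop atTop := by
    apply tendsto_atTop_mono' _ _ (tendsto_atTop_add_const_left _ (τ 1 - c)
      (Tendsto.const_mul_atTop hcpos tendsto_id))
    filter_upwards [eventually_ge_atTop (1:ℝ)] with t ht
    simpa using hlin t ht
  have h0 : Tendsto (fun t => τ t ^ (-α)) atTop (nhds 0) :=
    (tendsto_rpow_neg_atTop hα).comp htop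
  have hsq : Tendsto (fun t => τ' t ^ 2) atTop (nhds 1) := by
    have : Tendsto (fun t => 1 - τ t ^ (-α)) atTop (nhds (1 - 0)) :=
      tendsto_const_nhds.sub h0
    rw [sub_zero] at this
    refine this.congr fun t => ?_
    have := hE1' t
    linarith
  have hτ'1 : Tendsto τ' atTop (nhds 1) := by
    have hsqrt : Tendsto (fun t => Real.sqrt (τ' t ^ 2)) atTop (nhds 1) := by
      have := (Real.continuous_sqrt.tendsto 1).comp hsq
      simpa [Function.comp_def] using this
    refine hsqrt.congr' ?_
    filter_upwards [eventually_ge_atTop (0:ℝ)] with t ht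
    exact Real.sqrt_sq (hτ'nonneg t ht)
  exact tendsto_div_of_deriv_tendsto τ τ' 1 hd1 hτ'1
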